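/- Let G be a topological group, A ⊴ G a normal subgroup that is extremely amenable (every continuous A-action on a compact Hausdorff space has a fixed point), and let G act continuously and minimally on a compact Hausdorff space X. Then A acts trivially on X, so the action factors through G/A. -/

import Mathlib

universe u v

/-- If `A` is an extremely amenable normal subgroup of a topological group `G` (every
continuous `A`-action on a nonempty compact Hausdorff space has a fixed point), then
for every minimal `G`-flow `X` the subgroup `A` acts trivially on `X`; hence the
action factors through `G/A`. -/
theorem extremely_amenable_normal_subgroup_acts_trivially_on_minimal_flow
    {G : Type u} [Group G] [TopologicalSpace G] [IsTopologicalGroup G]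
    (A : Subgroup G) (hnorm : A.Normal)
    (hA : ∀ (Y : Type v) [TopologicalSpace Y] [CompactSpace Y] [T2Space Y] [Nonempty Y]
      (act : A → Y → Y),
      (∀ y : Y, act 1 y = y) →
      (∀ (a b : A) (y : Y), act (a * b) y = act a (act b y)) →
      Continuous (fun p : A × Y => act p.1 p.2) →
      ∃ y : Y, ∀ a : A, act a y = y)
    {X : Type v} [TopologicalSpace X] [CompactSpace X] [T2Space X] [Nonempty X]
    [MulAction G X] [ContinuousSMul G X]
    (hmin : ∀ x : X, Dense (MulAction.orbit G x)) :
    ∀ a ∈ A, ∀ x : X, a • x = x := by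
  intro a ha x
  obtain ⟨y, hy⟩ := hA X (fun b z => (b : G) • z)
    (fun z => one_smul G z)
    (fun b c z => mul_smul (b : G) (c : G) z)
    ((continuous_subtype_val.comp continuous_fst).smul continuous_snd)
  set F : Set X := {z | ∀ b : A, (b : G) • z = z} with hF
  have hFclosed : IsClosed F := by
    have : F = ⋂ b : A, {z | (b : G) • z = z} := by
      ext z; simp [hF, Set.mem_iInter]
    rw [this]
    exact isClosed_iInter fun b =>
      isClosed_eq (continuous_const_smul _) continuous_id
  have horb : MulAction.orbit G y ⊆ F := by
    rintro _ ⟨g, rfl⟩ b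
    have hmem : g⁻¹ * (b : G) * g ∈ A := by
      have := hnorm.conj_mem (b : G) b.2 g⁻¹
      simpa using this
    have hfix : (g⁻¹ * (b : G) * g) • y = y := hy ⟨_, hmem⟩
    have key : (b : G) * g = g * (g⁻¹ * (b : G) * g) := by group
    calc (b : G) • g • y = ((b : G) * g) • y := (mul_smul _ _ _).symm
      _ = (g * (g⁻¹ * (b : G) * g)) • y := by rw [key]
      _ = g • ((g⁻¹ * (b : G) * g) • y) := mul_smul _ _ _
      _ = g • y := by rw [hfix]
  have hdense : Dense F := (hmin y).mono horb
  have hx : x ∈ F := by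
    have : F = Set.univ := hFclosed.closure_eq ▸ hdense.closure_eq
    simp [this]
  exact hx ⟨a, ha⟩
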